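/- Suppose the relation ℘_{6666} = 6℘_{66}² − 3℘_{55} holds identically on U. Then the function P := ℘_{66} = −∂²_{u_6} log σ satisfies the Boussinesq equation on U, with u_6 the space variable and u_5 the time variable: ∂²P/∂u_5² = 4(∂P/∂u_6)² + 4P·∂²P/∂u_6² − (1/3)·∂⁴P/∂u_6⁴. (This follows by differentiating the hypothesised relation twice with respect to u_6 and using ℘_{5566} = ∂²℘_{66}/∂u_5², ℘_{666} = ∂℘_{66}/∂u_6, ℘_{6666} = ∂²℘_{66}/∂u_6², ℘_{666666} = ∂⁴℘_{66}/∂u_6⁴.) -/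

import Mathlib

/-- Partial derivative in the `i`-th coordinate direction of a function `ℂ⁶ → ℂ`. -/
noncomputable def pd (i : Fin 6) (f : (Fin 6 → ℂ) → ℂ) : (Fin 6 → ℂ) → ℂ :=
  fun u => fderiv ℂ f u (Pi.single i 1)

/-- `∂_j log σ = ∂_j σ / σ` (independent of the choice of branch of `log σ`). -/
noncomputable def dlog (σ : (Fin 6 → ℂ) → ℂ) (j : Fin 6) : (Fin 6 → ℂ) → ℂ :=
  fun u => pd j σ u / σ u

/-- The 2-index Kleinian ℘-function `℘_{ij} = −∂_i ∂_j log σ`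
(here the variable `u_k` corresponds to the coordinate `k − 1 : Fin 6`). -/
noncomputable def wp2 (σ : (Fin 6 → ℂ) → ℂ) (i j : Fin 6) : (Fin 6 → ℂ) → ℂ :=
  fun u => -(pd i (dlog σ j) u)

/-- The 4-index Kleinian ℘-function `℘_{ijkl} = −∂_i ∂_j ∂_k ∂_l log σ`. -/
noncomputable def wp4 (σ : (Fin 6 → ℂ) → ℂ) (i j k l : Fin 6) : (Fin 6 → ℂ) → ℂ :=
  fun u => -(pd i (pd j (pd k (dlog σ l))) u)

/- ### Auxiliary lemmas -/

lemma pd_congr {i : Fin 6} {f g : (Fin 6 → ℂ) → ℂ} {U : Set (Fin 6 → ℂ)} {u : Fin 6 → ℂ}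
    (hU : IsOpen U) (h : ∀ v ∈ U, f v = g v) (hu : u ∈ U) : pd i f u = pd i g u := by
  unfold pd
  rw [Filter.EventuallyEq.fderiv_eq (Filter.eventuallyEq_of_mem (hU.mem_nhds hu) h)]

lemma pd_neg (i : Fin 6) (f : (Fin 6 → ℂ) → ℂ) :
    pd i (fun u => -(f u)) = fun u => -(pd i f u) := by
  funext u; simp [pd, fderiv_neg]

lemma pd_analytic {f : (Fin 6 → ℂ) → ℂ} {U : Set (Fin 6 → ℂ)}
    (hf : AnalyticOnNhd ℂ f U) (i : Fin 6) : AnalyticOnNhd ℂ (pd i f) U := by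
  have h := (ContinuousLinearMap.apply ℂ ℂ ((Pi.single i 1 : Fin 6 → ℂ))).comp_analyticOnNhd
    hf.fderiv
  exact h

lemma pd_mul {i : Fin 6} {f g : (Fin 6 → ℂ) → ℂ} {u : Fin 6 → ℂ}
    (hf : DifferentiableAt ℂ f u) (hg : DifferentiableAt ℂ g u) :
    pd i (fun v => f v * g v) u = pd i f u * g u + f u * pd i g u := by
  unfold pd
  rw [fderiv_fun_mul hf hg]
  simp [smul_eq_mul]
  ring

lemma pd_swap {f : (Fin 6 → ℂ) → ℂ} {U : Set (Fin 6 → ℂ)} {u : Fin 6 → ℂ} (i j : Fin 6)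
    (hU : IsOpen U) (hf : AnalyticOnNhd ℂ f U) (hu : u ∈ U) :
    pd i (pd j f) u = pd j (pd i f) u := by
  have hd : AnalyticOnNhd ℂ (fderiv ℂ f) U := hf.fderiv
  have hder : HasFDerivAt (fderiv ℂ f) (fderiv ℂ (fderiv ℂ f) u) u :=
    ((hd u hu).differentiableAt).hasFDerivAt
  have hk : ∀ v w : Fin 6 → ℂ,
      fderiv ℂ (fun y => fderiv ℂ f y v) u w = fderiv ℂ (fderiv ℂ f) u w v := by
    intro v w
    have h : HasFDerivAt (fun y => fderiv ℂ f y v)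
        ((ContinuousLinearMap.apply ℂ ℂ v).comp (fderiv ℂ (fderiv ℂ f) u)) u :=
      ((ContinuousLinearMap.apply ℂ ℂ v).hasFDerivAt).comp u hder
    rw [h.fderiv]; rfl
  have hsymm : IsSymmSndFDerivAt ℂ f u :=
    ((hf u hu).contDiffAt (n := 2)).isSymmSndFDerivAt (by simp)
  show fderiv ℂ (fun y => fderiv ℂ f y (Pi.single j 1)) u (Pi.single i 1)
      = fderiv ℂ (fun y => fderiv ℂ f y (Pi.single i 1)) u (Pi.single j 1)
  rw [hk, hk, hsymm.eq]

lemma pd_poly {i : Fin 6} {f g : (Fin 6 → ℂ) → ℂ} {v : Fin 6 → ℂ}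
    (hf : DifferentiableAt ℂ f v) (hg : DifferentiableAt ℂ g v) :
    pd i (fun w => 6 * f w ^ 2 - 3 * g w) v = 12 * f v * pd i f v - 3 * pd i g v := by
  have h2 : DifferentiableAt ℂ (fun w => f w * f w) v := hf.mul hf
  have e : (fun w => 6 * f w ^ 2 - 3 * g w) = fun w => 6 * (f w * f w) - 3 * g w := by
    funext w; ring
  unfold pd
  rw [e, fderiv_fun_sub (h2.const_mul 6) (hg.const_mul 3), fderiv_const_mul h2,
    fderiv_const_mul hg, fderiv_fun_mul hf hf]
  simp [smul_eq_mul]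
  ring

lemma pd_poly2 {i : Fin 6} {f f1 g : (Fin 6 → ℂ) → ℂ} {v : Fin 6 → ℂ}
    (hf : DifferentiableAt ℂ f v) (hf1 : DifferentiableAt ℂ f1 v)
    (hg : DifferentiableAt ℂ g v) :
    pd i (fun w => 12 * f w * f1 w - 3 * g w) v
      = 12 * (pd i f v * f1 v + f v * pd i f1 v) - 3 * pd i g v := by
  have h2 : DifferentiableAt ℂ (fun w => f w * f1 w) v := hf.mul hf1
  have e : (fun w => 12 * f w * f1 w - 3 * g w) = fun w => 12 * (f w * f1 w) - 3 * g w := by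
    funext w; ring
  unfold pd
  rw [e, fderiv_fun_sub (h2.const_mul 12) (hg.const_mul 3), fderiv_const_mul h2,
    fderiv_const_mul hg, fderiv_fun_mul hf hf1]
  simp [smul_eq_mul]
  ring

lemma dlog_analytic {σ : (Fin 6 → ℂ) → ℂ} {U : Set (Fin 6 → ℂ)}
    (hσ : AnalyticOnNhd ℂ σ U) (hσ0 : ∀ u ∈ U, σ u ≠ 0) (l : Fin 6) :
    AnalyticOnNhd ℂ (dlog σ l) U :=
  (pd_analytic hσ l).div hσ hσ0

lemma pd_dlog_symm {σ : (Fin 6 → ℂ) → ℂ} {U : Set (Fin 6 → ℂ)} (hU : IsOpen U)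
    (hσ : AnalyticOnNhd ℂ σ U) (hσ0 : ∀ u ∈ U, σ u ≠ 0) (i j : Fin 6)
    {v : Fin 6 → ℂ} (hv : v ∈ U) :
    pd i (dlog σ j) v = pd j (dlog σ i) v := by
  have key : ∀ k l : Fin 6,
      σ v * pd k (dlog σ l) v = pd k (pd l σ) v - pd k σ v * (pd l σ v / σ v) := by
    intro k l
    have hd : ∀ w ∈ U, (fun w => σ w * dlog σ l w) w = pd l σ w := by
      intro w hw
      show σ w * (pd l σ w / σ w) = pd l σ w
      field_simp [hσ0 w hw]
    have h1 : pd k (fun w => σ w * dlog σ l w) v = pd k (pd l σ) v := pd_congr hU hd hv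
    rw [pd_mul ((hσ v hv).differentiableAt)
      (((dlog_analytic hσ hσ0 l) v hv).differentiableAt)] at h1
    have hdl : dlog σ l v = pd l σ v / σ v := rfl
    rw [hdl] at h1
    linear_combination h1
  have hswap : pd i (pd j σ) v = pd j (pd i σ) v := pd_swap i j hU hσ hv
  have h0 := hσ0 v hv
  refine mul_left_cancel₀ h0 ?_
  rw [key i j, key j i, hswap]
  ring

/-- if `℘_{6666} = 6℘_{66}² − 3℘_{55}` holds identically on `U`, then
`P := ℘_{66} = −∂²_{u6} log σ` satisfies the Boussinesq equation on `U`, with `u6` the space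
variable and `u5` the time variable:
`∂²P/∂u5² = 4(∂P/∂u6)² + 4P·∂²P/∂u6² − (1/3)∂⁴P/∂u6⁴`. -/
theorem stmt_18 (U : Set (Fin 6 → ℂ)) (hU : IsOpen U)
    (σ : (Fin 6 → ℂ) → ℂ) (hσ : AnalyticOnNhd ℂ σ U) (hσ0 : ∀ u ∈ U, σ u ≠ 0)
    (h1 : ∀ u ∈ U, wp4 σ 5 5 5 5 u = 6 * (wp2 σ 5 5 u) ^ 2 - 3 * wp2 σ 4 4 u) :
    ∀ u ∈ U,
      pd 4 (pd 4 (wp2 σ 5 5)) u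
        = 4 * (pd 5 (wp2 σ 5 5) u) ^ 2 + 4 * wp2 σ 5 5 u * pd 5 (pd 5 (wp2 σ 5 5)) u
            - (1/3) * pd 5 (pd 5 (pd 5 (pd 5 (wp2 σ 5 5)))) u := by
  intro u hu
  have hL : ∀ l : Fin 6, AnalyticOnNhd ℂ (dlog σ l) U := dlog_analytic hσ hσ0
  have hP : AnalyticOnNhd ℂ (wp2 σ 5 5) U := by
    have h := (pd_analytic (hL 5) 5).neg
    exact h
  have hQ : AnalyticOnNhd ℂ (wp2 σ 4 4) U := by
    have h := (pd_analytic (hL 4) 4).neg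
    exact h
  -- the 4-index function is the double pd₅ of the 2-index one
  have F1 : pd 5 (pd 5 (wp2 σ 5 5)) = wp4 σ 5 5 5 5 := by
    show pd 5 (pd 5 (fun w => -(pd 5 (dlog σ 5) w))) = _
    rw [pd_neg, pd_neg]
    rfl
  have h2 : ∀ w ∈ U, pd 5 (pd 5 (wp2 σ 5 5)) w
      = (fun w => 6 * (wp2 σ 5 5 w) ^ 2 - 3 * wp2 σ 4 4 w) w := by
    intro w hw; rw [F1]; exact h1 w hw
  -- first differentiation of the relation
  have D1 : ∀ z ∈ U, pd 5 (pd 5 (pd 5 (wp2 σ 5 5))) z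
      = (fun z => 12 * wp2 σ 5 5 z * pd 5 (wp2 σ 5 5) z - 3 * pd 5 (wp2 σ 4 4) z) z := by
    intro z hz
    have hc := pd_congr (i := 5) hU h2 hz
    rw [hc]
    exact pd_poly ((hP z hz).differentiableAt) ((hQ z hz).differentiableAt)
  -- second differentiation of the relation
  have D2 : pd 5 (pd 5 (pd 5 (pd 5 (wp2 σ 5 5)))) u
      = 12 * (pd 5 (wp2 σ 5 5) u * pd 5 (wp2 σ 5 5) u
          + wp2 σ 5 5 u * pd 5 (pd 5 (wp2 σ 5 5)) u)
        - 3 * pd 5 (pd 5 (wp2 σ 4 4)) u := by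
    have hc := pd_congr (i := 5) hU D1 hu
    rw [hc]
    exact pd_poly2 ((hP u hu).differentiableAt)
      (((pd_analytic hP 5) u hu).differentiableAt)
      (((pd_analytic hQ 5) u hu).differentiableAt)
  -- symmetry of mixed partials : ∂₅∂₅℘₄₄-part equals ∂₄∂₄℘₅₅-part
  have s1 : ∀ z ∈ U, pd 5 (pd 4 (dlog σ 4)) z = pd 4 (pd 4 (dlog σ 5)) z := by
    intro z hz
    have a := pd_swap 5 4 hU (hL 4) hz
    have b : pd 4 (pd 5 (dlog σ 4)) z = pd 4 (pd 4 (dlog σ 5)) z :=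
      pd_congr (i := 4) hU (fun w hw => pd_dlog_symm hU hσ hσ0 5 4 hw) hz
    exact a.trans b
  have main : pd 5 (pd 5 (pd 4 (dlog σ 4))) u = pd 4 (pd 4 (pd 5 (dlog σ 5))) u := by
    have a : pd 5 (pd 5 (pd 4 (dlog σ 4))) u = pd 5 (pd 4 (pd 4 (dlog σ 5))) u :=
      pd_congr (i := 5) hU s1 hu
    have b : pd 5 (pd 4 (pd 4 (dlog σ 5))) u = pd 4 (pd 5 (pd 4 (dlog σ 5))) u :=
      pd_swap 5 4 hU (pd_analytic (hL 5) 4) hu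
    have c : pd 4 (pd 5 (pd 4 (dlog σ 5))) u = pd 4 (pd 4 (pd 5 (dlog σ 5))) u :=
      pd_congr (i := 4) hU (fun w hw => pd_swap 5 4 hU (hL 5) hw) hu
    exact (a.trans b).trans c
  have eQ : pd 5 (pd 5 (wp2 σ 4 4)) = fun w => -(pd 5 (pd 5 (pd 4 (dlog σ 4))) w) := by
    show pd 5 (pd 5 (fun w => -(pd 4 (dlog σ 4) w))) = _
    rw [pd_neg, pd_neg]
  have eP : pd 4 (pd 4 (wp2 σ 5 5)) = fun w => -(pd 4 (pd 4 (pd 5 (dlog σ 5))) w) := by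
    show pd 4 (pd 4 (fun w => -(pd 5 (dlog σ 5) w))) = _
    rw [pd_neg, pd_neg]
  have S : pd 5 (pd 5 (wp2 σ 4 4)) u = pd 4 (pd 4 (wp2 σ 5 5)) u := by
    rw [eQ, eP]
    simp only
    rw [main]
  rw [← S]
  linear_combination ((1 : ℂ)/3) * D2
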